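/- If m = p₁p₂⋯p_ℓ is a product of distinct primes, then the number of sublattices of ℤⁿ of index m equals ∏_{i=1}^{ℓ} (1 + p_i + ⋯ + p_i^{n-1}). -/

import Mathlib

/-- `subCount n m` is the number of sublattices (subgroups) of `ℤⁿ` of index `m`. -/
noncomputable def subCount (n m : ℕ) : ℕ :=
  Nat.card {H : AddSubgroup (Fin n → ℤ) // H.index = m}

open Finset

section PrimeCount

variable {p : ℕ} [Fact p.Prime]

/-- Any `ZMod p`-module of cardinality `p` is linearly equivalent to `ZMod p`. -/
lemma exists_linearEquiv_of_card (Q : Type*) [AddCommGroup Q] [Module (ZMod p) Q]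
    (hQ : Nat.card Q = p) : Nonempty (ZMod p ≃ₗ[ZMod p] Q) := by
  have hp : p.Prime := Fact.out
  have hfin : Finite Q := Nat.finite_of_card_ne_zero (hQ ▸ hp.pos.ne')
  have hnt : Nontrivial Q := by
    rw [← Finite.one_lt_card_iff_nontrivial, hQ]; exact hp.one_lt
  obtain ⟨q, hq⟩ := exists_ne (0 : Q)
  let g := LinearMap.toSpanSingleton (ZMod p) Q q
  have hrange : LinearMap.range g = ⊤ := by
    set N := LinearMap.range g with hN
    have hdvd : Nat.card N ∣ Nat.card Q := N.toAddSubgroup.card_addSubgroup_dvd_card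
    rw [hQ] at hdvd
    have hne1 : Nat.card N ≠ 1 := by
      intro h1
      have : Subsingleton N := Nat.card_eq_one_iff_unique.mp h1 |>.1
      have hqN : q ∈ N := ⟨1, by simp [g]⟩
      have h0N : (0 : Q) ∈ N := N.zero_mem
      exact hq (by simpa using Subtype.ext_iff.mp (Subsingleton.elim (⟨q, hqN⟩ : N) ⟨0, h0N⟩))
    have hcard : Nat.card N = Nat.card Q := by
      rw [hQ]; exact ((Nat.dvd_prime hp).mp hdvd).resolve_left hne1
    have := AddSubgroup.eq_top_of_card_eq N.toAddSubgroup (by simpa using hcard)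
    rw [eq_top_iff]
    intro x _
    have : x ∈ N.toAddSubgroup := this ▸ AddSubgroup.mem_top x
    exact this
  have hsurj : Function.Surjective g := LinearMap.range_eq_top.mp hrange
  have : Fintype Q := Fintype.ofFinite Q
  have hbij : Function.Bijective g := by
    rw [Fintype.bijective_iff_surjective_and_card]
    refine ⟨hsurj, ?_⟩
    rw [ZMod.card, ← Nat.card_eq_fintype_card, hQ]
  exact ⟨LinearEquiv.ofBijective g hbij⟩

/-- Every submodule with quotient of cardinality `p` is the kernel of a linear functional. -/
lemma exists_ker_eq {V : Type*} [AddCommGroup V] [Module (ZMod p) V]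
    (W : Submodule (ZMod p) V) (hW : Nat.card (V ⧸ W) = p) :
    ∃ f : V →ₗ[ZMod p] ZMod p, LinearMap.ker f = W := by
  obtain ⟨e⟩ := exists_linearEquiv_of_card (V ⧸ W) hW
  refine ⟨e.symm.toLinearMap ∘ₗ W.mkQ, ?_⟩
  rw [LinearMap.ker_comp, LinearEquiv.ker, Submodule.comap_bot, Submodule.ker_mkQ]

/-- Two functionals with the same kernel differ by a scalar. -/
lemma eq_smul_of_ker_eq {F V : Type*} [Field F] [AddCommGroup V] [Module F V]
    (f g : V →ₗ[F] F) (hker : LinearMap.ker f = LinearMap.ker g) (hg : g ≠ 0) :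
    ∃ c : F, f = c • g := by
  obtain ⟨x, hx⟩ : ∃ x, g x ≠ 0 := by
    by_contra h
    push_neg at h
    exact hg (LinearMap.ext fun x => by simp [h x])
  set x₀ := (g x)⁻¹ • x with hx₀
  have hgx₀ : g x₀ = 1 := by
    rw [hx₀, map_smul, smul_eq_mul, inv_mul_cancel₀ hx]
  refine ⟨f x₀, LinearMap.ext fun y => ?_⟩
  have hmem : y - g y • x₀ ∈ LinearMap.ker g := by
    simp [LinearMap.mem_ker, map_sub, map_smul, hgx₀, smul_eq_mul]
  rw [← hker] at hmem
  have hf : f (y - g y • x₀) = 0 := hmem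
  rw [map_sub, map_smul, sub_eq_zero] at hf
  rw [LinearMap.smul_apply, smul_eq_mul, hf, smul_eq_mul, mul_comm]

end PrimeCount

section PrimeCountMain

variable (n : ℕ) {p : ℕ} [Fact p.Prime]

/-- The number of index-`p` subgroups of `(ZMod p)ⁿ`. -/
lemma count_index_prime (hp : p.Prime) :
    Nat.card {K : AddSubgroup (Fin n → ZMod p) // K.index = p}
      = ∑ j ∈ Finset.range n, p ^ j := by
  classical
  set V := Fin n → ZMod p
  -- transfer to submodules
  have e1 : {K : AddSubgroup V // K.index = p} ≃
      {W : Submodule (ZMod p) V // Nat.card (V ⧸ W) = p} := by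
    refine Equiv.subtypeEquiv (AddSubgroup.toZModSubmodule p).toEquiv (fun K => ?_)
    rfl
  rw [Nat.card_congr e1]
  set S := {W : Submodule (ZMod p) V // Nat.card (V ⧸ W) = p} with hS
  -- a chosen functional with given kernel
  have hF : ∀ W : S, ∃ f : V →ₗ[ZMod p] ZMod p, LinearMap.ker f = (W : Submodule (ZMod p) V) :=
    fun W => exists_ker_eq W.1 W.2
  choose F hFker using hF
  have hFne : ∀ W : S, F W ≠ 0 := by
    intro W h0
    have : LinearMap.ker (F W) = ⊤ := by rw [h0]; exact LinearMap.ker_zero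
    rw [hFker W] at this
    have : Subsingleton (V ⧸ (W : Submodule (ZMod p) V)) :=
      Submodule.Quotient.subsingleton_iff.mpr this
    have h1 : Nat.card (V ⧸ (W : Submodule (ZMod p) V)) = 1 :=
      Nat.card_eq_one_iff_unique.mpr ⟨this, ⟨0⟩⟩
    rw [W.2] at h1
    exact hp.one_lt.ne' h1
  -- the bijection with nonzero functionals
  have e2 : S × {c : ZMod p // c ≠ 0} ≃ {f : V →ₗ[ZMod p] ZMod p // f ≠ 0} := by
    refine Equiv.ofBijective (fun Wc => ⟨Wc.2.1 • F Wc.1, ?_⟩) ⟨?_, ?_⟩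
    · intro h0
      apply hFne Wc.1
      have := congrArg (fun g => (Wc.2.1)⁻¹ • g) h0
      simpa [smul_smul, inv_mul_cancel₀ Wc.2.2] using this
    · rintro ⟨W, c, hc⟩ ⟨W', c', hc'⟩ h
      simp only [Subtype.mk_eq_mk] at h
      have hWW' : W = W' := by
        have hk : LinearMap.ker (c • F W) = LinearMap.ker (c' • F W') := by rw [h]
        rw [LinearMap.ker_smul _ _ hc, LinearMap.ker_smul _ _ hc', hFker W, hFker W'] at hk
        exact Subtype.ext hk
      subst hWW'
      have hcc' : c = c' := by
        by_contra hne
        apply hFne W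
        have : (c - c') • F W = 0 := LinearMap.ext fun x => by
          have hx := LinearMap.congr_fun h x
          simp only [LinearMap.smul_apply, LinearMap.zero_apply, smul_eq_mul] at hx ⊢
          rw [sub_mul, hx, sub_self]
        have := congrArg (fun g => (c - c')⁻¹ • g) this
        simpa [smul_smul, inv_mul_cancel₀ (sub_ne_zero.mpr hne)] using this
      subst hcc'
      rfl
    · rintro ⟨f, hf⟩
      -- the kernel of f has quotient of cardinality p
      have hrange : LinearMap.range f = ⊤ := by
        obtain ⟨x, hx⟩ : ∃ x, f x ≠ 0 := by
          by_contra h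
          push_neg at h
          exact hf (LinearMap.ext fun x => by simp [h x])
        rw [eq_top_iff]
        intro c _
        exact ⟨(c * (f x)⁻¹) • x, by rw [map_smul, smul_eq_mul, mul_assoc,
          inv_mul_cancel₀ hx, mul_one]⟩
      have hcard : Nat.card (V ⧸ LinearMap.ker f) = p := by
        rw [Nat.card_congr (f.quotKerEquivRange).toEquiv, hrange]
        rw [Nat.card_congr (Submodule.topEquiv).toEquiv, Nat.card_zmod]
      obtain ⟨c, hcf⟩ := eq_smul_of_ker_eq f (F ⟨LinearMap.ker f, hcard⟩)
        (by rw [hFker]) (hFne _)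
      have hc : c ≠ 0 := by
        intro h0
        rw [h0, zero_smul] at hcf
        exact hf hcf
      exact ⟨⟨⟨LinearMap.ker f, hcard⟩, ⟨c, hc⟩⟩, Subtype.ext hcf.symm⟩
  -- count nonzero functionals
  have hdual : Nat.card {f : V →ₗ[ZMod p] ZMod p // f ≠ 0} = p ^ n - 1 := by
    have E := LinearEquiv.piRing (ZMod p) (ZMod p) (Fin n) (ZMod p)
    have e3 : {f : V →ₗ[ZMod p] ZMod p // f ≠ 0} ≃ {v : Fin n → ZMod p // v ≠ 0} :=
      Equiv.subtypeEquiv E.toEquiv (fun f => (not_congr E.map_eq_zero_iff).symm)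
    rw [Nat.card_congr e3, Nat.card_eq_fintype_card]
    have : Fintype.card {v : Fin n → ZMod p // v ≠ 0}
        = Fintype.card (Fin n → ZMod p) - Fintype.card {v : Fin n → ZMod p // v = 0} :=
      Fintype.card_subtype_compl _
    rw [this, Fintype.card_subtype_eq, Fintype.card_fun, ZMod.card, Fintype.card_fin]
  -- put everything together
  have hcards : Nat.card S * (p - 1) = p ^ n - 1 := by
    rw [← hdual, ← Nat.card_congr e2, Nat.card_prod]
    congr 1
    rw [Nat.card_eq_fintype_card]
    have : Fintype.card {c : ZMod p // c ≠ 0}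
        = Fintype.card (ZMod p) - Fintype.card {c : ZMod p // c = 0} :=
      Fintype.card_subtype_compl _
    rw [this, Fintype.card_subtype_eq, ZMod.card]
  have hgeom : (∑ j ∈ Finset.range n, p ^ j) * (p - 1) = p ^ n - 1 := by
    have h1 : (1 : ℕ) ≤ p := hp.one_lt.le.trans' (by norm_num)
    have h1n : (1 : ℕ) ≤ p ^ n := Nat.one_le_pow _ _ hp.pos
    have := geom_sum_mul (p : ℤ) n
    have hcast : ((∑ j ∈ Finset.range n, p ^ j : ℕ) : ℤ) * (((p : ℕ) : ℤ) - 1)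
        = ((p : ℕ) : ℤ) ^ n - 1 := by push_cast; simpa using this
    have : ((∑ j ∈ Finset.range n, p ^ j) * (p - 1) : ℕ) = ((p ^ n - 1 : ℕ) : ℕ) := by
      have := hcast
      zify [h1, h1n]
      linarith [this]
    simpa using this
  have hpos : 0 < p - 1 := Nat.sub_pos_of_lt hp.one_lt
  exact Nat.eq_of_mul_eq_mul_right hpos (hcards.trans hgeom.symm)

end PrimeCountMain

section PiDecomp

variable {ι : Type*} [Fintype ι] [DecidableEq ι]
variable {A : ι → Type*} [∀ i, AddCommGroup (A i)]

lemma toAddSubgroup_pi (K : ∀ i, AddSubgroup (A i)) :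
    (Submodule.pi Set.univ (fun i => (K i).toIntSubmodule)).toAddSubgroup
      = AddSubgroup.pi Set.univ K := by
  ext x
  simp only [Submodule.mem_toAddSubgroup, Submodule.mem_pi, AddSubgroup.mem_pi]
  exact Iff.rfl

lemma index_pi [∀ i, Finite (A i)] (K : ∀ i, AddSubgroup (A i)) :
    (AddSubgroup.pi Set.univ K).index = ∏ i, (K i).index := by
  have h1 : (AddSubgroup.pi Set.univ K).index
      = Nat.card ((∀ i, A i) ⧸ Submodule.pi Set.univ (fun i => (K i).toIntSubmodule)) := by
    rw [← toAddSubgroup_pi]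
    rfl
  rw [h1, Nat.card_congr (Submodule.quotientPi _).toEquiv, Nat.card_pi]
  rfl

lemma single_mem_of_mem
    (hco : Pairwise fun i j => (Nat.card (A i)).Coprime (Nat.card (A j)))
    [∀ i, Finite (A i)]
    (K : AddSubgroup (∀ i, A i)) {k : ∀ i, A i} (hk : k ∈ K) (i : ι) :
    Pi.single i (k i) ∈ K := by
  classical
  set N := ∏ j ∈ Finset.univ.erase i, Nat.card (A j) with hN
  have hsingle : ∀ (c : ℕ) (y : A i), c • (Pi.single i y : ∀ j, A j) = Pi.single i (c • y) := by
    intro c y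
    ext j
    by_cases h : j = i
    · subst h; simp
    · simp [Pi.single_eq_of_ne h]
  have h1 : N • k = Pi.single i (N • k i) := by
    ext j
    by_cases h : j = i
    · subst h; simp
    · have hdvd : Nat.card (A j) ∣ N := Finset.dvd_prod_of_mem _
        (Finset.mem_erase.mpr ⟨h, Finset.mem_univ j⟩)
      obtain ⟨c, hc⟩ := hdvd
      simp only [Pi.smul_apply, Pi.single_eq_of_ne h]
      rw [hc, mul_comm, mul_nsmul]
      simp [card_nsmul_eq_zero']
  have hNs : N • (Pi.single i (k i) : ∀ j, A j) ∈ K := by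
    rw [hsingle, ← h1]
    exact K.nsmul_mem hk N
  have hcard0 : (Nat.card (A i)) • (Pi.single i (k i) : ∀ j, A j) = 0 := by
    rw [hsingle]
    simp [card_nsmul_eq_zero']
  have hNco : Nat.Coprime N (Nat.card (A i)) :=
    Nat.Coprime.prod_left fun j hj => hco (Finset.mem_erase.mp hj).1
  -- Bezout
  have hbez : (1 : ℤ) = N * Nat.gcdA N (Nat.card (A i))
      + Nat.card (A i) * Nat.gcdB N (Nat.card (A i)) := by
    have := Nat.gcd_eq_gcd_ab N (Nat.card (A i))
    rwa [Nat.Coprime.gcd_eq_one hNco, Nat.cast_one] at this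
  set u := Nat.gcdA N (Nat.card (A i))
  set v := Nat.gcdB N (Nat.card (A i))
  have key : (Pi.single i (k i) : ∀ j, A j)
      = u • ((N : ℕ) • (Pi.single i (k i) : ∀ j, A j))
        + v • ((Nat.card (A i) : ℕ) • (Pi.single i (k i) : ∀ j, A j)) := by
    have h2 : u • ((N : ℤ) • (Pi.single i (k i) : ∀ j, A j))
        + v • ((Nat.card (A i) : ℤ) • (Pi.single i (k i) : ∀ j, A j))
        = ((N : ℤ) * u + (Nat.card (A i) : ℤ) * v) • (Pi.single i (k i) : ∀ j, A j) := by
      rw [add_zsmul, mul_comm (N : ℤ) u, mul_comm (Nat.card (A i) : ℤ) v, mul_zsmul, mul_zsmul]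
    rw [← natCast_zsmul (Pi.single i (k i) : ∀ j, A j) N,
      ← natCast_zsmul (Pi.single i (k i) : ∀ j, A j) (Nat.card (A i)), h2, ← hbez, one_zsmul]
  rw [key]
  exact K.add_mem (K.zsmul_mem hNs u) (K.zsmul_mem (by rw [hcard0]; exact K.zero_mem) v)

lemma pi_map_eval (K : ∀ i, AddSubgroup (A i)) (i : ι) :
    (AddSubgroup.pi Set.univ K).map (Pi.evalAddMonoidHom A i) = K i := by
  classical
  apply le_antisymm
  · rintro _ ⟨x, hx, rfl⟩
    exact hx i (Set.mem_univ i)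
  · intro y hy
    refine ⟨Pi.single i y, fun j _ => ?_, Pi.single_eq_same i y⟩
    by_cases h : j = i
    · subst h; simpa using hy
    · simp only [Pi.single_eq_of_ne h]
      exact (K j).zero_mem

lemma pi_bijective [∀ i, Finite (A i)]
    (hco : Pairwise fun i j => (Nat.Coprime (Nat.card (A i)) (Nat.card (A j)))) :
    Function.Bijective (fun K : ∀ i, AddSubgroup (A i) => AddSubgroup.pi Set.univ K) := by
  classical
  constructor
  · intro K K' h
    funext i
    rw [← pi_map_eval K i, ← pi_map_eval K' i]
    exact congrArg _ h
  · intro K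
    refine ⟨fun i => K.map (Pi.evalAddMonoidHom A i), le_antisymm ?_ ?_⟩
    · intro x hx
      have hxi : ∀ i, ∃ k ∈ K, k i = x i := by
        intro i
        obtain ⟨k, hk, hki⟩ := hx i (Set.mem_univ i)
        exact ⟨k, hk, hki⟩
      choose k hk hki using hxi
      have : x = ∑ i, Pi.single i (x i) := (Finset.univ_sum_single x).symm
      rw [this]
      apply AddSubgroup.sum_mem
      intro i _
      rw [← hki i]
      exact single_mem_of_mem hco K (hk i) i
    · intro x hx i _
      exact ⟨x, hx, rfl⟩

lemma count_pi [∀ i, Finite (A i)]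
    (hco : Pairwise fun i j => (Nat.Coprime (Nat.card (A i)) (Nat.card (A j))))
    (d : ι → ℕ)
    (hd : ∀ t : ι → ℕ, (∀ i, t i ∣ Nat.card (A i)) → ((∏ i, t i) = ∏ i, d i → ∀ i, t i = d i)) :
    Nat.card {K : AddSubgroup (∀ i, A i) // K.index = ∏ i, d i}
      = ∏ i, Nat.card {K : AddSubgroup (A i) // K.index = d i} := by
  classical
  let Ψ : (∀ i, AddSubgroup (A i)) ≃ AddSubgroup (∀ i, A i) :=
    Equiv.ofBijective _ (pi_bijective hco)
  have e1 : {t : ∀ i, AddSubgroup (A i) // (Ψ t).index = ∏ i, d i}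
      ≃ {K : AddSubgroup (∀ i, A i) // K.index = ∏ i, d i} :=
    Equiv.subtypeEquiv Ψ (fun t => Iff.rfl)
  have hcond : ∀ t : ∀ i, AddSubgroup (A i),
      ((Ψ t).index = ∏ i, d i) ↔ (∀ i, (t i).index = d i) := by
    intro t
    show (AddSubgroup.pi Set.univ t).index = ∏ i, d i ↔ _
    rw [index_pi]
    constructor
    · intro h
      exact hd _ (fun i => (t i).index_dvd_card) h
    · intro h
      exact Finset.prod_congr rfl fun i _ => h i
  have e2 : {t : ∀ i, AddSubgroup (A i) // (Ψ t).index = ∏ i, d i}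
      ≃ ∀ i, {K : AddSubgroup (A i) // K.index = d i} :=
    (Equiv.subtypeEquiv (Equiv.refl _) hcond).trans (Equiv.subtypePiEquivPi)
  rw [← Nat.card_congr e1, Nat.card_congr e2, Nat.card_pi]

end PiDecomp

section Reduction

/-- Counting index-`m` subgroups of `ℤⁿ` reduces to counting them in `(ZMod m)ⁿ`. -/
lemma subCount_eq_zmod (n m : ℕ) (hm : m ≠ 0) :
    subCount n m = Nat.card {K : AddSubgroup (Fin n → ZMod m) // K.index = m} := by
  haveI : NeZero m := ⟨hm⟩
  let φ : (Fin n → ℤ) →+ (Fin n → ZMod m) :=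
    { toFun := fun x i => ((x i : ℤ) : ZMod m)
      map_zero' := by funext i; simp
      map_add' := fun x y => by funext i; push_cast; simp }
  have hsurj : Function.Surjective φ := by
    intro y
    refine ⟨fun i => ((y i).val : ℤ), funext fun i => ?_⟩
    show (((y i).val : ℤ) : ZMod m) = y i
    push_cast
    exact ZMod.natCast_rightInverse (y i)
  have hker : ∀ H : AddSubgroup (Fin n → ℤ), H.index = m → φ.ker ≤ H := by
    intro H hH x hx
    have hx' : ∀ i, ((m : ℤ)) ∣ x i := by
      intro i
      have := congrFun (show φ x = 0 from hx) i
      exact (ZMod.intCast_zmod_eq_zero_iff_dvd _ _).mp this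
    have hxy : x = m • (fun i => x i / m) := by
      funext i
      simp only [Pi.smul_apply, nsmul_eq_mul]
      exact (Int.mul_ediv_cancel' (hx' i)).symm
    rw [hxy, ← hH]
    exact AddSubgroup.nsmul_index_mem H _
  apply Nat.card_congr
  refine ⟨fun H => ⟨H.1.map φ, ?_⟩, fun K => ⟨K.1.comap φ, ?_⟩, ?_, ?_⟩
  · rw [← AddSubgroup.index_comap_of_surjective _ hsurj, AddSubgroup.comap_map_eq,
      sup_of_le_left (hker _ H.2)]
    exact H.2
  · rw [AddSubgroup.index_comap_of_surjective _ hsurj]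
    exact K.2
  · rintro ⟨H, hH⟩
    exact Subtype.ext (by
      simp only [AddSubgroup.comap_map_eq]
      exact sup_of_le_left (hker _ hH))
  · rintro ⟨K, hK⟩
    exact Subtype.ext (AddSubgroup.map_comap_eq_self_of_surjective hsurj K)

/-- Transport the count of index-`m` subgroups along an additive equivalence. -/
lemma count_congr_addEquiv {G G' : Type*} [AddCommGroup G] [AddCommGroup G'] (e : G ≃+ G')
    (m : ℕ) :
    Nat.card {K : AddSubgroup G' // K.index = m}
      = Nat.card {K : AddSubgroup G // K.index = m} := by
  apply Nat.card_congr
  refine ⟨fun K => ⟨K.1.comap e.toAddMonoidHom, ?_⟩,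
    fun K => ⟨K.1.comap e.symm.toAddMonoidHom, ?_⟩, ?_, ?_⟩
  · rw [AddSubgroup.index_comap_of_surjective _ e.surjective]; exact K.2
  · rw [AddSubgroup.index_comap_of_surjective _ e.symm.surjective]; exact K.2
  · rintro ⟨K, hK⟩
    exact Subtype.ext (by ext x; simp [AddSubgroup.mem_comap])
  · rintro ⟨K, hK⟩
    exact Subtype.ext (by ext x; simp [AddSubgroup.mem_comap])

end Reduction

theorem subCount_squarefree (n m ℓ : ℕ) (p : Fin ℓ → ℕ)
    (hp : ∀ i, (p i).Prime) (hinj : Function.Injective p)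
    (hfact : m = ∏ i, p i) :
    subCount n m = ∏ i : Fin ℓ, ∑ j ∈ Finset.range n, p i ^ j := by
  classical
  subst hfact
  have hm0 : (∏ i, p i) ≠ 0 := Finset.prod_ne_zero_iff.mpr fun i _ => (hp i).pos.ne'
  haveI : ∀ i, NeZero (p i) := fun i => ⟨(hp i).pos.ne'⟩
  haveI hfinA : ∀ i, Finite (Fin n → ZMod (p i)) := fun i => inferInstance
  have hcop : Pairwise (Function.onFun Nat.Coprime p) := fun i j hij =>
    (Nat.coprime_primes (hp i) (hp j)).mpr fun h => hij (hinj h)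
  have hcardA : ∀ i, Nat.card (Fin n → ZMod (p i)) = p i ^ n := by
    intro i
    rw [Nat.card_pi]
    simp [Nat.card_zmod]
  -- the additive equivalence (ZMod m)ⁿ ≃ ∏ i, (ZMod pᵢ)ⁿ
  let e0 : ZMod (∏ i, p i) ≃+* ∀ i, ZMod (p i) := ZMod.prodEquivPi p hcop
  let E : (Fin n → ZMod (∏ i, p i)) ≃+ ∀ i, (Fin n → ZMod (p i)) :=
    (AddEquiv.piCongrRight fun _ : Fin n => e0.toAddEquiv).trans
      (AddEquiv.mk' (Equiv.piComm fun _ _ => ZMod (p _)) fun x y => rfl)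
  rw [subCount_eq_zmod n _ hm0, ← count_congr_addEquiv E]
  -- decompose via the pi structure
  have hcoA : Pairwise fun i j =>
      (Nat.card (Fin n → ZMod (p i))).Coprime (Nat.card (Fin n → ZMod (p j))) := by
    intro i j hij
    rw [hcardA i, hcardA j]
    exact Nat.Coprime.pow n n (hcop hij)
  have hd : ∀ t : Fin ℓ → ℕ, (∀ i, t i ∣ Nat.card (Fin n → ZMod (p i))) →
      ((∏ i, t i) = ∏ i, p i → ∀ i, t i = p i) := by
    intro t hdvd hprod i
    have hdvd' : ∀ j, t j ∣ p j ^ n := fun j => (hcardA j) ▸ hdvd j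
    choose a ha hta using fun j => (Nat.dvd_prime_pow (hp j)).mp (hdvd' j)
    have h : (∏ j, p j ^ a j) = ∏ j, p j := by
      rw [← hprod]
      exact Finset.prod_congr rfl fun j _ => (hta j).symm
    have hfa := congrArg (fun N => N.factorization (p i)) h
    have hL : (∏ j, p j ^ a j).factorization (p i) = a i := by
      rw [Nat.factorization_prod fun j _ => (pow_pos (hp j).pos _).ne']
      rw [Finsupp.finset_sum_apply]
      rw [Finset.sum_eq_single i]
      · rw [Nat.Prime.factorization_pow (hp i), Finsupp.single_apply, if_pos rfl]
      · intro j _ hji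
        rw [Nat.Prime.factorization_pow (hp j), Finsupp.single_apply,
          if_neg fun hc => hji (hinj hc)]
      · intro hi; exact absurd (Finset.mem_univ i) hi
    have hR : (∏ j, p j).factorization (p i) = 1 := by
      rw [Nat.factorization_prod fun j _ => (hp j).pos.ne']
      rw [Finsupp.finset_sum_apply]
      rw [Finset.sum_eq_single i]
      · rw [Nat.Prime.factorization (hp i), Finsupp.single_apply, if_pos rfl]
      · intro j _ hji
        rw [Nat.Prime.factorization (hp j), Finsupp.single_apply,
          if_neg fun hc => hji (hinj hc)]
      · intro hi; exact absurd (Finset.mem_univ i) hi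
    have hfa' : (∏ j, p j ^ a j).factorization (p i) = (∏ j, p j).factorization (p i) := hfa
    have : a i = 1 := by rw [hL, hR] at hfa'; exact hfa'
    rw [hta i, this, pow_one]
  rw [count_pi hcoA p hd]
  refine Finset.prod_congr rfl fun i _ => ?_
  haveI := Fact.mk (hp i)
  exact count_index_prime n (hp i)
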